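/- A 2-connected signed graph Σ = (G, σ) is balanced if and only if its n-th power signed graph Σ^n = (G^n, σ′) is balanced. -/

import Mathlib

open SimpleGraph Polynomial

variable {V : Type*}

/-- The sign of a walk: the product of the signs of its edges. -/
def walkSign {G : SimpleGraph V} (sg : V → V → ℤ) {u v : V} (p : G.Walk u v) : ℤ :=
  (p.darts.map fun d => sg d.toProd.1 d.toProd.2).prod

/-- `sigmaMax G sg u v`: the maximum sign over all shortest `u`–`v` paths. -/
noncomputable def sigmaMax (G : SimpleGraph V) (sg : V → V → ℤ) (u v : V) : ℤ := by
  classical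
  exact if ∃ p : G.Walk u v, p.length = G.dist u v ∧ walkSign sg p = 1 then 1 else -1

/-- `sigmaMin G sg u v`: the minimum sign over all shortest `u`–`v` paths. -/
noncomputable def sigmaMin (G : SimpleGraph V) (sg : V → V → ℤ) (u v : V) : ℤ := by
  classical
  exact if ∃ p : G.Walk u v, p.length = G.dist u v ∧ walkSign sg p = -1 then -1 else 1

/-- `u` and `v` are distance-compatible: all shortest `u`–`v` paths have the same sign. -/
def pairCompatible (G : SimpleGraph V) (sg : V → V → ℤ) (u v : V) : Prop :=
  ∀ p q : G.Walk u v, p.length = G.dist u v → q.length = G.dist u v →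
    walkSign sg p = walkSign sg q

/-- The `n`-th power graph: `u ~ v` iff `u ≠ v` and `d(u,v) ≤ n`. -/
def powerGraph (G : SimpleGraph V) (n : ℕ) : SimpleGraph V where
  Adj u v := u ≠ v ∧ G.dist u v ≤ n
  symm := by
    constructor
    intro u v h
    exact ⟨h.1.symm, by rw [SimpleGraph.dist_comm]; exact h.2⟩
  loopless := by
    constructor
    intro u h
    exact h.1 rfl

/-- A signed graph is balanced if every cycle has positive sign. -/
def SBalanced (G : SimpleGraph V) (sg : V → V → ℤ) : Prop :=
  ∀ ⦃u : V⦄ (p : G.Walk u u), p.IsCycle → walkSign sg p = 1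

/-- 2-connectedness: at least 3 vertices and deleting any vertex leaves a connected graph. -/
def TwoConnected [Fintype V] (G : SimpleGraph V) : Prop :=
  3 ≤ Fintype.card V ∧ ∀ v : V, ((⊤ : G.Subgraph).deleteVerts {v}).coe.Connected

/-- Signature of the associated signed complete graph `K^{D^max}(Σ)`:
edges of `G` keep their sign, non-adjacent pairs get `sigmaMax`. -/
noncomputable def kSigMax (G : SimpleGraph V) (sg : V → V → ℤ) (u v : V) : ℤ := by
  classical
  exact if G.Adj u v then sg u v else sigmaMax G sg u v

/-- Signature of the associated signed complete graph `K^{D^min}(Σ)`. -/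
noncomputable def kSigMin (G : SimpleGraph V) (sg : V → V → ℤ) (u v : V) : ℤ := by
  classical
  exact if G.Adj u v then sg u v else sigmaMin G sg u v

section Aux

variable {G : SimpleGraph V} {sg : V → V → ℤ}

@[simp] lemma walkSign_nil {u : V} : walkSign sg (Walk.nil : G.Walk u u) = 1 := rfl

@[simp] lemma walkSign_cons {u v w : V} (h : G.Adj u v) (p : G.Walk v w) :
    walkSign sg (Walk.cons h p) = sg u v * walkSign sg p := by
  simp [walkSign]

lemma walkSign_append {u v w : V} (p : G.Walk u v) (q : G.Walk v w) :
    walkSign sg (p.append q) = walkSign sg p * walkSign sg q := by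
  simp [walkSign, Walk.darts_append]

lemma walkSign_reverse (hsym : ∀ u v, sg u v = sg v u) {u v : V} (p : G.Walk u v) :
    walkSign sg p.reverse = walkSign sg p := by
  simp only [walkSign, Walk.darts_reverse, List.map_reverse, List.prod_reverse, List.map_map]
  congr 1
  apply List.map_congr_left
  intro d _
  exact (hsym _ _).symm

lemma walkSign_pm (hval : ∀ u v, G.Adj u v → sg u v = 1 ∨ sg u v = -1) {u v : V}
    (p : G.Walk u v) : walkSign sg p = 1 ∨ walkSign sg p = -1 := by
  induction p with
  | nil => left; rfl
  | cons h q ih =>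
    rw [walkSign_cons]
    rcases hval _ _ h with h1 | h1 <;> rcases ih with h2 | h2 <;> simp [h1, h2]

lemma walkSign_length_one {a b : V} (p : G.Walk a b) (hp : p.length = 1) :
    walkSign sg p = sg a b := by
  cases p with
  | nil => simp at hp
  | cons h q =>
    cases q with
    | nil => simp
    | cons h' q' => simp [Walk.length_cons] at hp

lemma exists_cons_of_length_ne_zero {a b : V} (w : G.Walk a b) (hw : w.length ≠ 0) :
    ∃ (c : V) (h : G.Adj a c) (w' : G.Walk c b), w = Walk.cons h w' := by
  cases w with
  | nil => simp at hw
  | cons h w' => exact ⟨_, h, w', rfl⟩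

lemma edge_not_mem_of_path {v u : V} :
    ∀ (q : G.Walk v u), q.support.Nodup → 2 ≤ q.length → s(u, v) ∉ q.edges := by
  intro q hnd hlen hmem
  cases q with
  | nil => simp at hlen
  | cons h₂ q₂ =>
    rw [Walk.edges_cons, List.mem_cons] at hmem
    rw [Walk.support_cons, List.nodup_cons] at hnd
    rcases hmem with hmem | hmem
    · rw [Sym2.eq_iff] at hmem
      rcases hmem with ⟨rfl, rfl⟩ | ⟨rfl, -⟩
      · exact hnd.1 q₂.end_mem_support
      · have h0 : q₂.length ≠ 0 := by
          rw [Walk.length_cons] at hlen; omega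
        obtain ⟨c', h', w', heq⟩ := exists_cons_of_length_ne_zero q₂ h0
        have hnd2 := hnd.2
        rw [heq, Walk.support_cons, List.nodup_cons] at hnd2
        exact hnd2.1 w'.end_mem_support
    · exact hnd.1 (q₂.fst_mem_support_of_mem_edges (Sym2.eq_swap ▸ hmem))

end Aux

section Closed

variable {G : SimpleGraph V} {sg : V → V → ℤ}

lemma closedWalkSign (hsym : ∀ u v, sg u v = sg v u)
    (hval : ∀ u v, G.Adj u v → sg u v = 1 ∨ sg u v = -1)
    (hbal : SBalanced G sg) :
    ∀ (N : ℕ) {u : V} (p : G.Walk u u), p.length ≤ N → walkSign sg p = 1 := by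
  classical
  intro N
  induction N using Nat.strong_induction_on with
  | _ N ih =>
  intro u p hp
  cases p with
  | nil => rfl
  | cons h q =>
    rename_i v
    -- q : G.Walk v u, h : G.Adj u v
    have hq0 : q.length ≠ 0 := by
      intro h0
      have := q.eq_of_length_eq_zero h0
      subst this
      exact h.ne rfl
    by_cases hnodup : (Walk.cons h q).support.tail.Nodup
    · -- support tail is nodup
      rw [Walk.support_cons, List.tail_cons] at hnodup
      by_cases hq1 : q.length = 1
      · rw [walkSign_cons, walkSign_length_one q hq1, hsym v u]
        rcases hval u v h with h1 | h1 <;> rw [h1] <;> norm_num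
      · have hq2 : 2 ≤ q.length := by omega
        have hcyc : (Walk.cons h q).IsCycle := by
          rw [Walk.cons_isCycle_iff]
          exact ⟨(Walk.isPath_def q).mpr hnodup, edge_not_mem_of_path q hnodup hq2⟩
        exact hbal _ hcyc
    · -- there is a repeated vertex in the tail
      set P := Walk.cons h q with hP
      obtain ⟨x, hx⟩ := List.exists_duplicate_iff_not_nodup.mpr hnodup
      have hcount : 2 ≤ P.support.tail.count x := List.duplicate_iff_two_le_count.mp hx
      have hxsupp : x ∈ P.support := by
        rw [P.support_eq_cons]
        exact List.mem_cons_of_mem _ (hx.mem)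
      set r := P.rotate x hxsupp with hr
      have hdarts : r.darts ~r P.darts := P.rotate_darts x hxsupp
      have hsign : walkSign sg r = walkSign sg P := by
        unfold walkSign
        exact ((hdarts.map _).perm).prod_eq
      have hlenr : r.length = P.length := by
        rw [← Walk.length_darts, ← Walk.length_darts, hdarts.perm.length_eq]
      have hcountr : 2 ≤ r.support.tail.count x := by
        rwa [((P.support_rotate x hxsupp).perm).count_eq]
      have hr0 : r.length ≠ 0 := by
        rw [hlenr, hP, Walk.length_cons]; omega
      obtain ⟨y, hadj, r', heq⟩ := exists_cons_of_length_ne_zero r hr0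
      have hcountr' : 2 ≤ r'.support.count x := by
        rwa [heq, Walk.support_cons, List.tail_cons] at hcountr
      have hxr' : x ∈ r'.support := by
        rw [← List.count_pos_iff]; omega
      set q1 := r'.takeUntil x hxr' with hq1
      set q2 := r'.dropUntil x hxr' with hq2def
      have hspec : q1.append q2 = r' := r'.take_spec hxr'
      have hcount1 : q1.support.count x = 1 := r'.count_support_takeUntil_eq_one hxr'
      have hlen12 : q1.length + q2.length = r'.length := by
        rw [← Walk.length_append, hspec]
      have hsplit : r'.support.count x = q1.support.count x + q2.support.tail.count x := by
        rw [← hspec, Walk.support_append, List.count_append]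
      have hq2len : q2.length ≠ 0 := by
        intro h0
        have htail : q2.support.tail = [] := by
          have hls := q2.length_support
          rw [← List.length_eq_zero_iff]
          have := List.length_tail (l := q2.support)
          omega
        rw [htail] at hsplit
        simp at hsplit
        omega
      have hNbig : q1.length + q2.length + 2 ≤ N + 1 := by
        have h1 : P.length ≤ N := hp
        have h2 : r.length = r'.length + 1 := by rw [heq, Walk.length_cons]
        omega
      have hlt1 : q1.length + 1 < N := by omega
      have hlt2 : q2.length < N := by omega
      have hPsign : walkSign sg P = sg x y * (walkSign sg q1 * walkSign sg q2) := by
        rw [← hsign, heq, walkSign_cons, ← walkSign_append, hspec]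
      have e1 : walkSign sg (Walk.cons hadj q1) = 1 := ih _ hlt1 _ le_rfl
      have e2 : walkSign sg q2 = 1 := ih _ hlt2 _ le_rfl
      rw [walkSign_cons] at e1
      rw [hPsign, ← mul_assoc, e1, e2, one_mul]

end Closed

section More

variable {G : SimpleGraph V} {sg : V → V → ℤ}

lemma walkSign_theta {H : SimpleGraph V} {sg' : V → V → ℤ} {θ : V → ℤ}
    (hθ : ∀ v, θ v * θ v = 1)
    (hsg : ∀ u v, H.Adj u v → sg' u v = θ u * θ v) {a b : V} (p : H.Walk a b) :
    walkSign sg' p = θ a * θ b := by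
  induction p with
  | nil => exact (hθ _).symm
  | @cons u v w h q ih =>
    rw [walkSign_cons, ih, hsg _ _ h]
    linear_combination θ u * θ w * hθ v

lemma walkSign_congr {sg2 : V → V → ℤ} (h : ∀ a b, G.Adj a b → sg a b = sg2 a b)
    {a b : V} (p : G.Walk a b) : walkSign sg p = walkSign sg2 p := by
  unfold walkSign
  congr 1
  apply List.map_congr_left
  intro d _
  exact h _ _ d.adj

lemma walkSign_mapLe {G H : SimpleGraph V} (hle : G ≤ H) (sg2 : V → V → ℤ) {a b : V}
    (p : G.Walk a b) : walkSign sg2 (p.mapLe hle) = walkSign sg2 p := by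
  unfold walkSign Walk.mapLe
  rw [Walk.darts_map, List.map_map]
  rfl

lemma sigmaMax_adj (hval : ∀ u v, G.Adj u v → sg u v = 1 ∨ sg u v = -1) {a b : V}
    (hG : G.Adj a b) : sigmaMax G sg a b = sg a b := by
  classical
  have hdist : G.dist a b = 1 := SimpleGraph.dist_eq_one_iff_adj.mpr hG
  have hlen : (hG.toWalk).length = 1 := rfl
  have hws : walkSign sg hG.toWalk = sg a b := walkSign_length_one _ hlen
  simp only [sigmaMax]
  rcases hval a b hG with h1 | h1
  · rw [if_pos ⟨hG.toWalk, by rw [hlen, hdist], by rw [hws, h1]⟩, h1]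
  · rw [if_neg, h1]
    rintro ⟨p, hl, hs⟩
    rw [hdist] at hl
    rw [walkSign_length_one p hl, h1] at hs
    norm_num at hs

end More

theorem balanced_iff_power_balanced {V : Type*} [Fintype V] (G : SimpleGraph V) (sg : V → V → ℤ)
    (hconn : G.Connected) (hsym : ∀ u v, sg u v = sg v u)
    (hval : ∀ u v, G.Adj u v → sg u v = 1 ∨ sg u v = -1)
    (h2 : TwoConnected G) (n : ℕ) (hn : 1 ≤ n) :
    SBalanced G sg ↔ SBalanced (powerGraph G n) (sigmaMax G sg) := by
  classical
  constructor
  · intro hbal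
    have hne : Nonempty V := Fintype.card_pos_iff.mp (by have := h2.1; omega)
    obtain ⟨r⟩ := hne
    have hreach : ∀ v, G.Reachable r v := fun v => hconn.preconnected r v
    set pr : ∀ v : V, G.Walk r v := fun v => (hreach v).some with hpr
    set θ : V → ℤ := fun v => walkSign sg (pr v) with hθ
    have hclosed : ∀ {a : V} (c : G.Walk a a), walkSign sg c = 1 :=
      fun {a} c => closedWalkSign hsym hval hbal c.length c le_rfl
    have hθpm : ∀ v, θ v = 1 ∨ θ v = -1 := fun v => walkSign_pm hval _
    have hθsq : ∀ v, θ v * θ v = 1 := by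
      intro v; rcases hθpm v with h | h <;> rw [h] <;> norm_num
    have hkey : ∀ {a b : V} (p : G.Walk a b), walkSign sg p = θ a * θ b := by
      intro a b p
      have hc := hclosed (((pr a).append p).append (pr b).reverse)
      rw [walkSign_append, walkSign_append, walkSign_reverse hsym] at hc
      have hc' : θ a * walkSign sg p * θ b = 1 := hc
      rcases hθpm a with h1 | h1 <;> rcases hθpm b with h2 | h2 <;>
        rcases walkSign_pm hval p with h3 | h3 <;>
        rw [h1, h2, h3] at hc' ⊢ <;> revert hc' <;> norm_num
    have hmulpm : ∀ a b : V, θ a * θ b = 1 ∨ θ a * θ b = -1 := by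
      intro a b
      rcases hθpm a with h1 | h1 <;> rcases hθpm b with h2 | h2 <;> rw [h1, h2] <;> norm_num
    have hsmax : ∀ a b : V, sigmaMax G sg a b = θ a * θ b := by
      intro a b
      obtain ⟨p0, hp0⟩ := hconn.exists_walk_length_eq_dist a b
      simp only [sigmaMax]
      rcases hmulpm a b with h | h
      · rw [if_pos ⟨p0, hp0, by rw [hkey p0, h]⟩, h]
      · rw [if_neg, h]
        rintro ⟨p, hl, hs⟩
        rw [hkey p, h] at hs
        norm_num at hs
    intro u p _
    exact (walkSign_theta hθsq (fun a b _ => hsmax a b) p).trans (hθsq u)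
  · intro hP u p hcyc
    have hle : G ≤ powerGraph G n := by
      intro a b hab
      exact ⟨hab.ne, by rw [SimpleGraph.dist_eq_one_iff_adj.mpr hab]; exact hn⟩
    have hcyc' : (p.mapLe hle).IsCycle := (Walk.mapLe_isCycle hle).mpr hcyc
    have h1 := hP (p.mapLe hle) hcyc'
    rw [walkSign_mapLe] at h1
    exact (walkSign_congr (fun a b hab => (sigmaMax_adj hval hab).symm) p).trans h1
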